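/- If an improvement relation R relates states s and q of two deterministic transition systems, then s is terminating if and only if q is terminating, and the evaluation length satisfies |s| ≥ |q|. -/

import Mathlib

/-- `n`-step iteration of a transition relation. -/
inductive StepN {S : Type*} (R : S → S → Prop) : ℕ → S → S → Prop where
  | refl (s : S) : StepN R 0 s s
  | step {n : ℕ} {s u v : S} : R s u → StepN R n u v → StepN R (n+1) s v


/-- Steps of a deterministic transition system given by a partial successor map. -/
def OStepN {S : Type*} (f : S → Option S) : ℕ → S → S → Prop :=
  StepN (fun a b => f a = some b)

/-- A state is terminating if it reaches a final state (one with no successor). -/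
def Terminates {S : Type*} (f : S → Option S) (s : S) : Prop :=
  ∃ n s', OStepN f n s s' ∧ f s' = none

lemma stepN_comp {S : Type*} {f : S → Option S} {n m : ℕ} {a b c : S}
    (h1 : OStepN f n a b) (h2 : OStepN f m b c) : OStepN f (n + m) a c := by
  induction h1 with
  | refl => simpa using h2
  | step hs _ ih =>
      have := StepN.step (R := fun a b => f a = some b) hs (ih h2)
      simpa [OStepN, Nat.add_right_comm] using this

lemma stepN_split {S : Type*} {f : S → Option S} {m : ℕ} :
    ∀ {n : ℕ} {s a b : S}, OStepN f m s b → OStepN f n s a → f a = none →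
      m ≤ n ∧ OStepN f (n - m) b a := by
  induction m with
  | zero =>
    intro n s a b hb ha hfin
    cases hb
    exact ⟨Nat.zero_le _, ha⟩
  | succ m ih =>
    intro n s a b hb ha hfin
    cases hb with
    | step hs h =>
      rename_i u
      cases ha with
      | refl => simp [hfin] at hs
      | step hs' h' =>
        rename_i n' u'
        have hu : u = u' := by
          have := hs.symm.trans hs'
          exact Option.some.inj this
        subst hu
        obtain ⟨hle, hst⟩ := ih h h' hfin
        exact ⟨Nat.succ_le_succ hle, by simpa [Nat.succ_sub_succ] using hst⟩

lemma lemA {S Q : Type*} {f : S → Option S} {g : Q → Option Q} {Rel : S → Q → Prop}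
    (h3 : ∀ s q q', Rel s q → g q = some q' →
      ∃ s' q'', ∃ n m : ℕ, OStepN f m s s' ∧ OStepN g n q' q'' ∧ Rel s' q'' ∧ n + 1 ≤ m) :
    ∀ n : ℕ, ∀ s q s', Rel s q → OStepN f n s s' → f s' = none →
      ∃ m q', m ≤ n ∧ OStepN g m q q' ∧ g q' = none := by
  intro n
  induction n using Nat.strong_induction_on with
  | _ n ih =>
    intro s q s' hrel hstep hfin
    cases hq : g q with
    | none => exact ⟨0, q, Nat.zero_le _, StepN.refl q, hq⟩
    | some q1 =>
      obtain ⟨s1, q2, n', m', hf, hg, hrel', hle⟩ := h3 s q q1 hrel hq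
      obtain ⟨hm'le, hrest⟩ := stepN_split hf hstep hfin
      obtain ⟨m'', q3, hm''le, hg'', hfin''⟩ :=
        ih (n - m') (by omega) s1 q2 s' hrel' hrest hfin
      exact ⟨n' + m'' + 1, q3, by omega, StepN.step hq (stepN_comp hg hg''), hfin''⟩

lemma lemB {S Q : Type*} {f : S → Option S} {g : Q → Option Q} {Rel : S → Q → Prop}
    (h1 : ∀ s q, Rel s q → g q = none → ∃ n s', OStepN f n s s' ∧ f s' = none)
    (h3 : ∀ s q q', Rel s q → g q = some q' →
      ∃ s' q'', ∃ n m : ℕ, OStepN f m s s' ∧ OStepN g n q' q'' ∧ Rel s' q'' ∧ n + 1 ≤ m) :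
    ∀ m : ℕ, ∀ s q q', Rel s q → OStepN g m q q' → g q' = none → Terminates f s := by
  intro m
  induction m using Nat.strong_induction_on with
  | _ m ih =>
    intro s q q' hrel hstep hfin
    cases hq : g q with
    | none => exact ⟨_, _, (h1 s q hrel hq).choose_spec.choose_spec⟩
    | some q1 =>
      obtain ⟨s1, q2, n', m', hf, hg, hrel', hle⟩ := h3 s q q1 hrel hq
      cases hstep with
      | refl => simp [hfin] at hq
      | step hs' h' =>
        rename_i m1 u
        have hu : u = q1 := Option.some.inj (hs'.symm.trans hq)
        subst hu
        obtain ⟨hn'le, hrest⟩ := stepN_split hg h' hfin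
        obtain ⟨k, s2, hks, hfin2⟩ := ih (m1 - n') (by omega) s1 q2 q' hrel' hrest hfin
        exact ⟨m' + k, s2, stepN_comp hf hks, hfin2⟩

/-- if an improvement relation `Rel` relates states `s` and `q` of two
deterministic transition systems, then `s` terminates iff `q` terminates, and the
evaluation lengths satisfy `|s| ≥ |q|`. -/
theorem improvement_termination_and_length {S Q : Type*}
    (f : S → Option S) (g : Q → Option Q) (Rel : S → Q → Prop)
    (h1 : ∀ s q, Rel s q → g q = none → ∃ n s', OStepN f n s s' ∧ f s' = none)
    (h2 : ∀ s q s', Rel s q → f s = some s' →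
      ∃ s'' q' n m, OStepN f m s' s'' ∧ OStepN g n q q' ∧ Rel s'' q' ∧ n ≤ m + 1)
    (h3 : ∀ s q q', Rel s q → g q = some q' →
      ∃ s' q'' n m, OStepN f m s s' ∧ OStepN g n q' q'' ∧ Rel s' q'' ∧ n + 1 ≤ m)
    {s : S} {q : Q} (hsq : Rel s q) :
    (Terminates f s ↔ Terminates g q) ∧
    (∀ n m s' q', OStepN f n s s' → f s' = none → OStepN g m q q' → g q' = none →
      m ≤ n) := by
  constructor
  · constructor
    · rintro ⟨n, s', hst, hfin⟩
      obtain ⟨m, q', _, hg, hfin'⟩ := lemA h3 n s q s' hsq hst hfin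
      exact ⟨m, q', hg, hfin'⟩
    · rintro ⟨m, q', hst, hfin⟩
      exact lemB h1 h3 m s q q' hsq hst hfin
  · intro n m s' q' hfn hfinS hgm hfinQ
    obtain ⟨m'', q3, hle, hg3, hfin3⟩ := lemA h3 n s q s' hsq hfn hfinS
    obtain ⟨hle2, _⟩ := stepN_split hgm hg3 hfin3
    omega
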